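/- Let Σ be an n×n positive semi-definite matrix with operator norm ‖Σ‖ = 1, stable rank r = tr(Σ), and let γ > 0 satisfy tr((γΣ + I)^{-1}) = n - k for some integer 0 < k < r. Then γ ≤ k/(r - k). -/

import Mathlib

open Matrix
open scoped Matrix.Norms.L2Operator

/-- If `‖Σ‖ = 1`, `r = tr(Σ)`, `0 < k < r` and `γ > 0` satisfies `tr((γΣ+I)⁻¹) = n - k`, then
`γ ≤ k/(r-k)`. -/
theorem stmt4 {n k : ℕ} (hk : 0 < k)
    (S : Matrix (Fin n) (Fin n) ℝ) (hS : S.PosSemidef) (hnorm : ‖S‖ = 1)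
    (hkr : (k : ℝ) < S.trace)
    (γ : ℝ) (hγ : 0 < γ) (hdef : (γ • S + 1)⁻¹.trace = (n : ℝ) - k) :
    γ ≤ (k : ℝ) / (S.trace - k) := by
  have hH := hS.1
  set U : Matrix (Fin n) (Fin n) ℝ := (hH.eigenvectorUnitary : Matrix (Fin n) (Fin n) ℝ) with hU
  set lam : Fin n → ℝ := hH.eigenvalues with hlam
  have hUU : star U * U = 1 := Unitary.coe_star_mul_self _
  have hUU' : U * star U = 1 := Unitary.coe_mul_star_self _
  have hspec : S = U * diagonal lam * star U := by
    have := hH.spectral_theorem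
    simpa using this
  -- eigenvalues nonneg and ≤ 1
  have h0 : ∀ i, 0 ≤ lam i := hS.eigenvalues_nonneg
  have h1 : ∀ i, lam i ≤ 1 := by
    intro i
    have hv := hH.mulVec_eigenvectorBasis i
    have hb := l2_opNorm_mulVec S (hH.eigenvectorBasis i)
    have hnv : ‖hH.eigenvectorBasis i‖ = 1 :=
      hH.eigenvectorBasis.orthonormal.1 i
    have he : (EuclideanSpace.equiv (Fin n) ℝ).symm (S *ᵥ hH.eigenvectorBasis i)
        = lam i • hH.eigenvectorBasis i := by
      rw [ContinuousLinearEquiv.symm_apply_eq]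
      exact hv
    rw [he, norm_smul, hnorm, hnv, one_mul, mul_one, Real.norm_eq_abs] at hb
    exact le_trans (le_abs_self _) hb
  classical
  set f : Fin n → ℝ := fun i => γ * lam i + 1 with hf
  have hfpos : ∀ i, 0 < f i := fun i => by have := h0 i; simp only [hf]; nlinarith
  have hd : diagonal f = γ • diagonal lam + 1 := by
    rw [← Matrix.diagonal_one, ← Matrix.diagonal_smul, ← Matrix.diagonal_add]
    congr 1
  have hA : γ • S + 1 = U * diagonal f * star U := by
    rw [hd, hspec, mul_add, add_mul, mul_one, hUU', Matrix.mul_smul, Matrix.smul_mul]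

  have hinv : (γ • S + 1)⁻¹ = U * diagonal (fun i => (f i)⁻¹) * star U := by
    apply Matrix.inv_eq_right_inv
    rw [hA]
    calc (U * diagonal f * star U) * (U * diagonal (fun i => (f i)⁻¹) * star U)
        = U * (diagonal f * ((star U * U) * (diagonal (fun i => (f i)⁻¹) * star U))) := by
          simp only [mul_assoc]
      _ = 1 := by
          have he : (fun i => f i * (f i)⁻¹) = fun _ : Fin n => (1:ℝ) :=
            funext fun i => mul_inv_cancel₀ (hfpos i).ne'
          have hone : Matrix.diagonal (fun _ : Fin n => (1:ℝ)) = 1 := Matrix.diagonal_one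
          rw [hUU, one_mul, ← mul_assoc (diagonal f), diagonal_mul_diagonal, he, hone,
            one_mul, hUU']
  have htrS : S.trace = ∑ i, lam i := by
    rw [hspec, trace_mul_cycle, hUU, one_mul, trace_diagonal]
  have htrInv : (γ • S + 1)⁻¹.trace = ∑ i, (f i)⁻¹ := by
    rw [hinv, trace_mul_cycle, hUU, one_mul, trace_diagonal]
  have hsum : ∑ i, (f i)⁻¹ = (n : ℝ) - k := by rw [← htrInv]; exact hdef
  have hsum2 : ∑ i, (1 - (f i)⁻¹) = (k : ℝ) := by
    rw [Finset.sum_sub_distrib, hsum]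
    simp
  have hterm : ∀ i, γ / (γ + 1) * lam i ≤ 1 - (f i)⁻¹ := by
    intro i
    have hl0 := h0 i; have hl1 := h1 i; have hfi := hfpos i
    simp only [hf] at hfi ⊢
    have h2 : 1 - (γ * lam i + 1)⁻¹ = γ * lam i / (γ * lam i + 1) := by
      field_simp
      ring
    rw [h2, div_mul_eq_mul_div, div_le_div_iff₀ (by linarith) hfi]
    nlinarith [mul_nonneg (mul_nonneg hγ.le hl0) (mul_nonneg hγ.le (sub_nonneg.mpr hl1))]
  have hge : γ / (γ + 1) * S.trace ≤ (k : ℝ) := by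
    rw [htrS, Finset.mul_sum, ← hsum2]
    exact Finset.sum_le_sum fun i _ => hterm i
  rw [div_mul_eq_mul_div, div_le_iff₀ (by linarith)] at hge
  rw [le_div_iff₀ (by linarith)]
  nlinarith
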